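/- arXiv:1311.1573 — 3 statements merged into one kernel-verified Lean document; each statement's English description precedes it below -/
import Mathlib

section
/- Let $R$ be a Noetherian local ring and $\mathfrak{p}$ a prime ideal. Every element $x$ of the injective hull $E_R(R/\mathfrak{p})$ is annihilated by some power of $\mathfrak{p}$, i.e. there exists $n \in \mathbb{N}$ with $\mathfrak{p}^n x = 0$. -/
/-- `f : M →ₗ[R] E` exhibits `E` as an injective hull (injective envelope) of `M`:
`E` is an injective `R`-module and `f` embeds `M` as an essential submodule of `E`. -/
def IsInjectiveHull (R : Type*) [CommRing R] {M E : Type*} [AddCommGroup M] [Module R M]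
    [AddCommGroup E] [Module R E] (f : M →ₗ[R] E) : Prop :=
  Module.Injective R E ∧ Function.Injective f ∧
    ∀ N : Submodule R E, N ≠ ⊥ → N ⊓ LinearMap.range f ≠ ⊥

theorem every_element_of_injective_hull_is_prime_power_torsion
    {R : Type*} [CommRing R] [IsNoetherianRing R] [IsLocalRing R]
    (p : Ideal R) [p.IsPrime] {E : Type*} [AddCommGroup E] [Module R E]
    (f : (R ⧸ p) →ₗ[R] E) (hf : IsInjectiveHull R f) (x : E) :
    ∃ n : ℕ, ∀ r ∈ p ^ n, r • x = 0 := by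
  obtain ⟨hinj, hfinj, hess⟩ := hf
  -- every element of the image of `f` is killed by `p`
  have himg : ∀ a ∈ p, ∀ z ∈ LinearMap.range f, a • z = 0 := by
    intro a ha z hz
    obtain ⟨m, rfl⟩ := hz
    obtain ⟨b, rfl⟩ := Submodule.Quotient.mk_surjective p m
    have hab : a • b ∈ p := by
      rw [smul_eq_mul]; exact Ideal.mul_mem_right b p ha
    rw [← map_smul, ← Submodule.Quotient.mk_smul,
      (Submodule.Quotient.mk_eq_zero p).2 hab, map_zero]
  -- key: every `a ∈ p` kills `x` after raising to some power
  have key : ∀ a ∈ p, ∃ n : ℕ, a ^ n • x = 0 := by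
    intro a ha
    by_contra hcon
    push_neg at hcon
    let c : ℕ →o Ideal R :=
      ⟨fun n => LinearMap.ker (LinearMap.toSpanSingleton R E (a ^ n • x)),
       monotone_nat_of_le_succ (by
        intro n r hr
        simp only [LinearMap.mem_ker, LinearMap.toSpanSingleton_apply] at hr ⊢
        rw [pow_succ', mul_smul, smul_comm r a, hr, smul_zero])⟩
    obtain ⟨n, hn⟩ := monotone_stabilizes_iff_noetherian.mpr
      (inferInstance : IsNoetherian R R) c
    set y : E := a ^ n • x with hy
    have hy0 : y ≠ 0 := hcon n
    have hspan : (Submodule.span R {y} : Submodule R E) ≠ ⊥ := by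
      simpa [Submodule.span_singleton_eq_bot] using hy0
    obtain ⟨z, hz, hz0⟩ :=
      (Submodule.ne_bot_iff _).1 (hess _ hspan)
    obtain ⟨hz1, hz2⟩ := hz
    obtain ⟨s, rfl⟩ := Submodule.mem_span_singleton.1 hz1
    have haz : a • (s • y) = 0 := himg a ha _ hz2
    have hs : s ∈ c (n + 1) := by
      show s ∈ LinearMap.ker (LinearMap.toSpanSingleton R E (a ^ (n + 1) • x))
      rw [LinearMap.mem_ker, LinearMap.toSpanSingleton_apply, pow_succ', mul_smul,
        ← hy, smul_comm s a]
      exact haz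
    rw [← hn (n + 1) (Nat.le_succ n)] at hs
    have hs' : s • y = 0 := hs
    exact hz0 hs'
  -- conclude using the annihilator ideal of `x`
  set I : Ideal R := LinearMap.ker (LinearMap.toSpanSingleton R E x) with hIdef
  have hle : p ≤ I.radical := by
    intro a ha
    obtain ⟨n, hn⟩ := key a ha
    exact ⟨n, by simpa [I, LinearMap.mem_ker] using hn⟩
  obtain ⟨n, hn⟩ := Ideal.exists_pow_le_of_le_radical_of_fg hle
    (IsNoetherian.noetherian p)
  exact ⟨n, fun r hr => by simpa [I, LinearMap.mem_ker] using hn hr⟩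
end

section
/- Let $R$ be a Noetherian local ring and $\mathfrak{p}$ a prime ideal. The injective hull $E_R(R/\mathfrak{p})$ admits a module structure over the $\mathfrak{p}$-adic completion $\hat{R}^{\mathfrak{p}}$ extending its $R$-module structure, defined by $\hat{r} \cdot x = r x$ whenever $\mathfrak{p}^n x = 0$ and $\hat{r} - r \in \mathfrak{p}^n \hat{R}^{\mathfrak{p}}$. -/
/-- A module structure on `E` over the `p`-adic completion `R̂ᵖ = AdicCompletion p R`
extends the `R`-module structure and is given by the rule `r̂ • x = r • x` whenever
`pⁿ • x = 0` and `r̂ - r ∈ pⁿ R̂ᵖ`. -/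
def IsCanonicalCompletionStructure {R : Type*} [CommRing R] (p : Ideal R)
    (E : Type*) [AddCommGroup E] [Module R E]
    [inst : Module (AdicCompletion p R) E] : Prop :=
  (∀ (r : R) (x : E), (algebraMap R (AdicCompletion p R) r) • x = r • x) ∧
    ∀ (a : AdicCompletion p R) (x : E) (n : ℕ) (r : R),
      (∀ c ∈ p ^ n, c • x = 0) →
      a - algebraMap R (AdicCompletion p R) r ∈
        (p ^ n).map (algebraMap R (AdicCompletion p R)) →
      a • x = r • x

section Aux

variable {R : Type*} [CommRing R] (p : Ideal R)

/-- A representative in `R` of `a : AdicCompletion p R` modulo `p ^ n`. -/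
noncomputable def adicRep (a : AdicCompletion p R) (n : ℕ) : R :=
  (Ideal.Quotient.mk_surjective (AdicCompletion.evalₐ p n a)).choose

lemma adicRep_spec (a : AdicCompletion p R) (n : ℕ) :
    Ideal.Quotient.mk (p ^ n) (adicRep p a n) = AdicCompletion.evalₐ p n a :=
  (Ideal.Quotient.mk_surjective (AdicCompletion.evalₐ p n a)).choose_spec

lemma evalₐ_eq_mk_adicRep {m k : ℕ} (h : m ≤ k) (a : AdicCompletion p R) :
    AdicCompletion.evalₐ p m a = Ideal.Quotient.mk (p ^ m) (adicRep p a k) := by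
  obtain ⟨f, rfl⟩ := AdicCompletion.mk_surjective p R a
  have h1 : f.val k - adicRep p (AdicCompletion.mk p R f) k ∈ p ^ k := by
    rw [← Ideal.Quotient.eq, adicRep_spec, AdicCompletion.evalₐ_mk]
  have h2 : f.val m - f.val k ∈ p ^ m := by
    have hsm := SModEq.sub_mem.mp (f.property h)
    have hh : (p ^ m • ⊤ : Ideal R) = p ^ m := by ext x; simp
    rwa [hh] at hsm
  rw [AdicCompletion.evalₐ_mk, Ideal.Quotient.eq]
  have := add_mem h2 ((Ideal.pow_le_pow_right h) h1)
  simpa using this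

lemma adicRep_diff (a : AdicCompletion p R) (n m : ℕ) :
    adicRep p a n - adicRep p a m ∈ p ^ min n m := by
  rw [← Ideal.Quotient.eq, ← evalₐ_eq_mk_adicRep p (min_le_left n m) a,
    evalₐ_eq_mk_adicRep p (min_le_right n m) a]

variable {E : Type*} [AddCommGroup E] [Module R E]

lemma kill_smul_eq {x : E} {n : ℕ} (hx : ∀ c ∈ p ^ n, c • x = 0) {r s : R}
    (h : r - s ∈ p ^ n) : r • x = s • x := by
  have := hx _ h
  rwa [sub_smul, sub_eq_zero] at this

variable (htors : ∀ x : E, ∃ n : ℕ, ∀ c ∈ p ^ n, c • x = 0)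

/-- The scalar multiplication of the completion on a `p`-power-torsion module. -/
noncomputable def adicSMul (a : AdicCompletion p R) (x : E) : E :=
  adicRep p a (htors x).choose • x

lemma adicSMul_eq (a : AdicCompletion p R) {x : E} {m : ℕ}
    (hm : ∀ c ∈ p ^ m, c • x = 0) :
    adicSMul p htors a x = adicRep p a m • x := by
  have hn : ∀ c ∈ p ^ (htors x).choose, c • x = 0 := (htors x).choose_spec
  refine kill_smul_eq p (n := min (htors x).choose m) ?_ (adicRep_diff p a _ _)
  rcases min_cases (htors x).choose m with ⟨h, _⟩ | ⟨h, _⟩ <;> rw [h] <;> assumption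

lemma mk_adicRep_mul (a b : AdicCompletion p R) (n : ℕ) :
    Ideal.Quotient.mk (p ^ n) (adicRep p (a * b) n) =
      Ideal.Quotient.mk (p ^ n) (adicRep p a n * adicRep p b n) := by
  rw [adicRep_spec, map_mul, map_mul, adicRep_spec, adicRep_spec]

lemma mk_adicRep_add (a b : AdicCompletion p R) (n : ℕ) :
    Ideal.Quotient.mk (p ^ n) (adicRep p (a + b) n) =
      Ideal.Quotient.mk (p ^ n) (adicRep p a n + adicRep p b n) := by
  rw [adicRep_spec, map_add, map_add, adicRep_spec, adicRep_spec]

/-- The module structure of the completion on a `p`-power-torsion module. -/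
noncomputable def adicModule : Module (AdicCompletion p R) E where
  smul a x := adicSMul p htors a x
  one_smul x := by
    obtain ⟨n, hn⟩ := htors x
    show adicSMul p htors 1 x = x
    rw [adicSMul_eq p htors 1 hn]
    have h1 : adicRep p 1 n • x = (1 : R) • x := by
      refine kill_smul_eq p hn ?_
      rw [← Ideal.Quotient.eq, adicRep_spec, map_one, map_one]
    rw [h1, one_smul]
  mul_smul a b x := by
    obtain ⟨n, hn⟩ := htors x
    show adicSMul p htors (a * b) x = adicSMul p htors a (adicSMul p htors b x)
    have hkill : ∀ c ∈ p ^ n, c • (adicRep p b n • x) = 0 := fun c hc => by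
      rw [smul_comm, hn c hc, smul_zero]
    rw [adicSMul_eq p htors (a * b) hn, adicSMul_eq p htors b hn,
      adicSMul_eq p htors a hkill, smul_smul]
    exact kill_smul_eq p hn ((Ideal.Quotient.eq).mp (mk_adicRep_mul p a b n))
  smul_zero a := by
    show adicSMul p htors a 0 = 0
    exact smul_zero _
  smul_add a x y := by
    obtain ⟨nx, hx⟩ := htors x
    obtain ⟨ny, hy⟩ := htors y
    have hx' : ∀ c ∈ p ^ max nx ny, c • x = 0 := fun c hc =>
      hx c (Ideal.pow_le_pow_right (le_max_left nx ny) hc)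
    have hy' : ∀ c ∈ p ^ max nx ny, c • y = 0 := fun c hc =>
      hy c (Ideal.pow_le_pow_right (le_max_right nx ny) hc)
    have hxy : ∀ c ∈ p ^ max nx ny, c • (x + y) = 0 := fun c hc => by
      rw [smul_add, hx' c hc, hy' c hc, add_zero]
    show adicSMul p htors a (x + y) = adicSMul p htors a x + adicSMul p htors a y
    rw [adicSMul_eq p htors a hxy, adicSMul_eq p htors a hx',
      adicSMul_eq p htors a hy', smul_add]
  add_smul a b x := by
    obtain ⟨n, hn⟩ := htors x
    show adicSMul p htors (a + b) x = adicSMul p htors a x + adicSMul p htors b x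
    rw [adicSMul_eq p htors (a + b) hn, adicSMul_eq p htors a hn,
      adicSMul_eq p htors b hn, ← add_smul]
    exact kill_smul_eq p hn ((Ideal.Quotient.eq).mp (mk_adicRep_add p a b n))
  zero_smul x := by
    obtain ⟨n, hn⟩ := htors x
    show adicSMul p htors 0 x = 0
    rw [adicSMul_eq p htors 0 hn]
    have h1 : adicRep p 0 n • x = (0 : R) • x := by
      refine kill_smul_eq p hn ?_
      rw [← Ideal.Quotient.eq, adicRep_spec, map_zero, map_zero]
    rw [h1, zero_smul]

lemma evalₐ_eq_of_sub_mem {n : ℕ} {a : AdicCompletion p R} {r : R}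
    (h : a - algebraMap R (AdicCompletion p R) r ∈
      (p ^ n).map (algebraMap R (AdicCompletion p R))) :
    AdicCompletion.evalₐ p n a = Ideal.Quotient.mk (p ^ n) r := by
  have hker : (p ^ n).map (algebraMap R (AdicCompletion p R)) ≤
      RingHom.ker (AdicCompletion.evalₐ p n : AdicCompletion p R →+* R ⧸ p ^ n) := by
    rw [Ideal.map_le_iff_le_comap]
    intro c hc
    simp only [Ideal.mem_comap, RingHom.mem_ker, AlgHom.coe_ringHom_mk]
    show AdicCompletion.evalₐ p n (algebraMap R (AdicCompletion p R) c) = 0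
    rw [AlgHom.commutes, Ideal.Quotient.algebraMap_eq, Ideal.Quotient.eq_zero_iff_mem]
    exact hc
  have h0 := hker h
  rw [RingHom.mem_ker] at h0
  have : AdicCompletion.evalₐ p n a -
      AdicCompletion.evalₐ p n (algebraMap R (AdicCompletion p R) r) = 0 := by
    rw [← map_sub]; exact h0
  rw [sub_eq_zero] at this
  rw [this, AlgHom.commutes, Ideal.Quotient.algebraMap_eq]

end Aux

theorem injective_hull_admits_adic_completion_module_structure
    {R : Type*} [CommRing R] [IsNoetherianRing R] [IsLocalRing R]
    (p : Ideal R) [p.IsPrime] {E : Type*} [AddCommGroup E] [Module R E]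
    (f : (R ⧸ p) →ₗ[R] E) (hf : IsInjectiveHull R f) :
    ∃ inst : Module (AdicCompletion p R) E,
      @IsCanonicalCompletionStructure R _ p E _ _ inst := by
  classical
  -- Step 1: every prime which is the annihilator of a nonzero element of `E` equals `p`.
  have hprime : ∀ z : E, z ≠ 0 → ((R ∙ z).annihilator).IsPrime →
      (R ∙ z).annihilator = p := by
    intro z hz hq
    have hN : (R ∙ z) ≠ ⊥ := by
      simpa [Submodule.span_singleton_eq_bot] using hz
    obtain ⟨w, hw, hw0⟩ := (Submodule.ne_bot_iff _).mp (hf.2.2 (R ∙ z) hN)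
    rw [Submodule.mem_inf] at hw
    obtain ⟨hw1, hw2⟩ := hw
    obtain ⟨t, rfl⟩ := Submodule.mem_span_singleton.mp hw1
    obtain ⟨u, hu⟩ := hw2
    have hu0 : u ≠ 0 := by
      rintro rfl
      rw [map_zero] at hu
      exact hw0 hu.symm
    obtain ⟨v, rfl⟩ := Ideal.Quotient.mk_surjective u
    have hv : v ∉ p := fun h => hu0 (Ideal.Quotient.eq_zero_iff_mem.mpr h)
    have hwann : ∀ r : R, r • (t • z) = 0 ↔ r ∈ p := by
      intro r
      rw [← hu, ← map_smul, LinearMap.map_eq_zero_iff f hf.2.1]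
      have : r • (Ideal.Quotient.mk p v) = Ideal.Quotient.mk p (r * v) := by
        rw [← Ideal.Quotient.mk_eq_mk, ← Ideal.Quotient.mk_eq_mk,
          ← Submodule.Quotient.mk_smul, smul_eq_mul]
      rw [this, Ideal.Quotient.eq_zero_iff_mem]
      constructor
      · intro h
        rcases ‹p.IsPrime›.mem_or_mem h with h' | h'
        · exact h'
        · exact absurd h' hv
      · intro h
        exact Ideal.mul_mem_right v p h
    apply le_antisymm
    · intro r hr
      have hrz : r • z = 0 := (Submodule.mem_annihilator_span_singleton _ _).mp hr
      have : r • (t • z) = 0 := by rw [smul_comm, hrz, smul_zero]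
      exact (hwann r).mp this
    · intro r hr
      have : r • (t • z) = 0 := (hwann r).mpr hr
      rw [smul_smul] at this
      have hrt : r * t ∈ (R ∙ z).annihilator :=
        (Submodule.mem_annihilator_span_singleton _ _).mpr this
      rcases hq.mem_or_mem hrt with h' | h'
      · exact h'
      · exfalso
        apply hw0
        exact (Submodule.mem_annihilator_span_singleton _ _).mp h'
  -- Step 2: every element of `E` is annihilated by some power of `p`.
  have htors : ∀ x : E, ∃ n : ℕ, ∀ c ∈ p ^ n, c • x = 0 := by
    intro x
    by_cases hx : x = 0
    · exact ⟨0, fun c _ => by rw [hx, smul_zero]⟩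
    have hrad : p ≤ ((R ∙ x).annihilator).radical := by
      intro c hc
      have hmono : Monotone (fun k : ℕ => (R ∙ (c ^ k • x)).annihilator) := by
        apply monotone_nat_of_le_succ
        intro k r hr
        rw [Submodule.mem_annihilator_span_singleton] at hr ⊢
        rw [pow_succ, mul_comm, mul_smul, smul_comm, hr, smul_zero]
      obtain ⟨k, hk⟩ := (monotone_stabilizes_iff_noetherian.mpr inferInstance)
        ⟨fun k : ℕ => (R ∙ (c ^ k • x)).annihilator, hmono⟩
      by_cases hck : c ^ k • x = 0
      · exact ⟨k, (Submodule.mem_annihilator_span_singleton _ _).mpr hck⟩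
      · exfalso
        obtain ⟨P, hP, hPy⟩ := exists_le_isAssociatedPrime_of_isNoetherianRing R
          (M := ↥(R ∙ (c ^ k • x)))
          ⟨c ^ k • x, Submodule.mem_span_singleton_self _⟩
          (by simp only [ne_eq, Submodule.mk_eq_zero]; exact hck)
        obtain ⟨hPprime, zb, hzb⟩ := isAssociatedPrime_iff.mp hP
        rw [Submodule.bot_colon'] at hzb
        have hz0 : (zb : E) ≠ 0 := by
          intro h0
          apply hPprime.ne_top
          rw [hzb, Submodule.span_singleton_eq_bot.mpr (Subtype.ext h0),
            Submodule.annihilator_bot]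
        have hPz : P = (R ∙ (zb : E)).annihilator := by
          rw [hzb]
          ext r
          rw [Submodule.mem_annihilator_span_singleton,
            Submodule.mem_annihilator_span_singleton]
          constructor
          · intro h
            simpa using Subtype.ext_iff.mp h
          · intro h
            exact Subtype.ext (by simpa using h)
        have hPp : (R ∙ (zb : E)).annihilator = p := hprime _ hz0 (hPz ▸ hPprime)
        obtain ⟨s, hs⟩ := Submodule.mem_span_singleton.mp zb.2
        have hcz : c • (zb : E) = 0 := by
          refine (Submodule.mem_annihilator_span_singleton _ _).mp ?_
          rw [hPp]
          exact hc
        have hs1 : s • (c ^ (k + 1) • x) = 0 := by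
          calc s • (c ^ (k + 1) • x) = c • (s • (c ^ k • x)) := by
                rw [pow_succ, mul_comm, mul_smul, smul_comm]
            _ = c • (zb : E) := by rw [hs]
            _ = 0 := hcz
        have hkk : (R ∙ (c ^ k • x)).annihilator =
            (R ∙ (c ^ (k + 1) • x)).annihilator := hk (k + 1) (Nat.le_succ k)
        have hmem0 : s ∈ (R ∙ (c ^ k • x)).annihilator := by
          rw [hkk]
          exact (Submodule.mem_annihilator_span_singleton _ _).mpr hs1
        have : s • (c ^ k • x) = 0 := (Submodule.mem_annihilator_span_singleton _ _).mp hmem0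
        rw [hs] at this
        exact hz0 this
    obtain ⟨n, hn⟩ := Ideal.exists_pow_le_of_le_radical_of_fg hrad
      (IsNoetherian.noetherian p)
    exact ⟨n, fun c hc => (Submodule.mem_annihilator_span_singleton _ _).mp (hn hc)⟩
  refine ⟨adicModule p htors, ?_, ?_⟩
  · intro r x
    obtain ⟨n, hn⟩ := htors x
    show adicSMul p htors (algebraMap R (AdicCompletion p R) r) x = r • x
    rw [adicSMul_eq p htors _ hn]
    refine kill_smul_eq p hn ?_
    rw [← Ideal.Quotient.eq, adicRep_spec, AlgHom.commutes, Ideal.Quotient.algebraMap_eq]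
  · intro a x n r hkill hmem
    show adicSMul p htors a x = r • x
    rw [adicSMul_eq p htors a hkill]
    refine kill_smul_eq p hkill ?_
    rw [← Ideal.Quotient.eq, adicRep_spec]
    exact evalₐ_eq_of_sub_mem p hmem
end

section
/- Let $M$ be an $R$-module, $\phi' : F' \to M$ a flat precover and $\phi : F \to M$ a flat cover, with $\phi' = \phi \circ f$ for some $R$-linear $f : F' \to F$. Then $f$ is surjective and $\ker(f)$ is a direct summand of $F'$. -/
/-- `φ : F →ₗ[R] M` is a flat precover: `F` is flat and every map from a flat module to `M`
factors through `φ`. -/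
def IsFlatPrecover {R : Type u} [CommRing R] {F M : Type u} [AddCommGroup F] [Module R F]
    [AddCommGroup M] [Module R M] (φ : F →ₗ[R] M) : Prop :=
  Module.Flat R F ∧ ∀ (G : Type u) [AddCommGroup G] [Module R G], Module.Flat R G →
    ∀ g : G →ₗ[R] M, ∃ h : G →ₗ[R] F, φ ∘ₗ h = g

/-- `φ : F →ₗ[R] M` is a flat cover: a flat precover such that every endomorphism `f` of `F`
with `φ ∘ f = φ` is an automorphism. -/
def IsFlatCover {R : Type u} [CommRing R] {F M : Type u} [AddCommGroup F] [Module R F]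
    [AddCommGroup M] [Module R M] (φ : F →ₗ[R] M) : Prop :=
  IsFlatPrecover φ ∧ ∀ f : F →ₗ[R] F, φ ∘ₗ f = φ → Function.Bijective f

theorem flat_precover_to_flat_cover_surjective_and_kernel_summand
    {R : Type u} [CommRing R] {F F' M : Type u} [AddCommGroup F] [Module R F]
    [AddCommGroup F'] [Module R F'] [AddCommGroup M] [Module R M]
    (φ' : F' →ₗ[R] M) (φ : F →ₗ[R] M) (f : F' →ₗ[R] F)
    (hpre : IsFlatPrecover φ') (hcov : IsFlatCover φ) (hfac : φ ∘ₗ f = φ') :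
    Function.Surjective f ∧ ∃ N : Submodule R F', IsCompl (LinearMap.ker f) N := by
  obtain ⟨hF'flat, hfact⟩ := hpre
  obtain ⟨⟨hFflat, _⟩, hauto⟩ := hcov
  obtain ⟨h, hh⟩ := hfact F hFflat φ
  have hgφ : φ ∘ₗ (f ∘ₗ h) = φ := by
    rw [← LinearMap.comp_assoc, hfac, hh]
  have hbij : Function.Bijective (f ∘ₗ h) := hauto _ hgφ
  set g : F ≃ₗ[R] F := LinearEquiv.ofBijective (f ∘ₗ h) hbij with hg
  set e : F →ₗ[R] F' := h ∘ₗ (g.symm : F →ₗ[R] F) with he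
  have hfe : ∀ x : F, f (e x) = x := by
    intro x
    have h1 : f (h (g.symm x)) = g (g.symm x) := rfl
    rw [he]
    simp [h1]
  have hsurj : Function.Surjective f := fun x => ⟨e x, hfe x⟩
  refine ⟨hsurj, ⟨LinearMap.range e, ?_⟩⟩
  have hinj : Function.Injective e := by
    intro a b hab
    have := congrArg f hab
    rwa [hfe, hfe] at this
  have hproj : LinearMap.IsProj (LinearMap.range e) (e ∘ₗ f) := by
    constructor
    · intro x
      exact ⟨f x, rfl⟩
    · rintro x ⟨y, rfl⟩
      simp [hfe y]
  have hker : LinearMap.ker (e ∘ₗ f) = LinearMap.ker f := by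
    ext x
    constructor
    · intro hx
      have : e (f x) = e 0 := by simpa using hx
      simpa using hinj this
    · intro hx
      simp only [LinearMap.mem_ker] at hx ⊢
      simp [hx]
  have := hproj.isCompl
  rw [hker] at this
  exact this.symm
end
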